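/- arXiv:2011.05398 — 4 statements merged into one kernel-verified Lean document; each statement's English description precedes it below -/
import Mathlib

section
/- Let f be a quadratic polynomial as in the context. For every squarefree positive integer d one has ρ(d) ≤ λ(d), where λ(d)=Σ_{e|d} χ_Δ(e). -/
open Finset

noncomputable section

/-- The Kronecker symbol `(D/p)` at a prime `p`. -/
def kroneckerPrime (D : ℤ) (p : ℕ) : ℤ :=
  if p = 2 then (if D % 2 = 0 then 0 else if D % 8 = 1 ∨ D % 8 = 7 then 1 else -1)
  else jacobiSym D p

/-- The Kronecker symbol `χ_D(n) = (D/n)` for `n : ℕ`, extended multiplicatively. -/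
def kronecker (D : ℤ) (n : ℕ) : ℤ :=
  n.factorization.prod fun p k => kroneckerPrime D p ^ k

/-- `L(1, χ_D) = ∑_{n ≥ 1} χ_D(n)/n`, as the limit of its partial sums. -/
def LOne (D : ℤ) : ℝ :=
  Filter.limUnder Filter.atTop fun N : ℕ => ∑ n ∈ Finset.Icc 1 N, (kronecker D n : ℝ) / n

/-- `λ = 1 * χ_D`, i.e. `λ(n) = ∑_{d ∣ n} χ_D(d)`. -/
def lamArith (D : ℤ) (n : ℕ) : ℤ := ∑ d ∈ n.divisors, kronecker D d

/-- The quadratic polynomial `f(n) = a n² + b n + c`. -/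
def fInt (a b c n : ℤ) : ℤ := a * n ^ 2 + b * n + c

/-- `ρ(d) = #{n mod d : f(n) ≡ 0 (mod d)}`. -/
def rho (a b c : ℤ) (d : ℕ) : ℕ :=
  ((Finset.range d).filter fun n : ℕ => (d : ℤ) ∣ fInt a b c (n : ℤ)).card

/-- `A = #𝒜 = #{n ∈ ℤ : 0 ≤ f(n) ≤ N}`. -/
def Acard (a b c N : ℤ) : ℕ := Set.ncard {n : ℤ | 0 ≤ fInt a b c n ∧ fInt a b c n ≤ N}

/-- `A_d = #{n ∈ 𝒜 : d ∣ f(n)}`. -/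
def Adcard (a b c N : ℤ) (d : ℕ) : ℕ :=
  Set.ncard {n : ℤ | 0 ≤ fInt a b c n ∧ fInt a b c n ≤ N ∧ (d : ℤ) ∣ fInt a b c n}

/-- The finset of primes `p < x`. -/
def primesLT (x : ℝ) : Finset ℕ :=
  (Finset.range (Nat.ceil x + 1)).filter fun p => p.Prime ∧ (p : ℝ) < x

/-- `V(x) = ∏_{p < x} (1 - ρ(p)/p)`. -/
def Vprod (a b c : ℤ) (x : ℝ) : ℝ := ∏ p ∈ primesLT x, (1 - (rho a b c p : ℝ) / p)

/-- `W(x) = ∏_{p < x} (1 - 1/p)(1 - χ_D(p)/p)`. -/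
def Wprod (D : ℤ) (x : ℝ) : ℝ :=
  ∏ p ∈ primesLT x, ((1 - 1 / (p : ℝ)) * (1 - (kronecker D p : ℝ) / p))

/-- `P(z) = ∏_{p < z} p`. -/
def Pprod (z : ℝ) : ℕ := ∏ p ∈ primesLT z, p

/-- `S(𝒜, z) = #{n ∈ 𝒜 : gcd(f(n), P(z)) = 1}`. -/
def Ssieve (a b c N : ℤ) (z : ℝ) : ℕ :=
  Set.ncard {n : ℤ | 0 ≤ fInt a b c n ∧ fInt a b c n ≤ N ∧
    Int.gcd (fInt a b c n) (Pprod z) = 1}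

/-- `S(𝒜_p, z) = #{n ∈ 𝒜 : p ∣ f(n), gcd(f(n), P(z)) = 1}`. -/
def SsieveP (a b c N : ℤ) (p : ℕ) (z : ℝ) : ℕ :=
  Set.ncard {n : ℤ | 0 ≤ fInt a b c n ∧ fInt a b c n ≤ N ∧ (p : ℤ) ∣ fInt a b c n ∧
    Int.gcd (fInt a b c n) (Pprod z) = 1}

/-- `π_f(N) = #{n ∈ ℤ : 0 ≤ f(n) ≤ N, f(n) prime}`. -/
def piF (a b c N : ℤ) : ℕ :=
  Set.ncard {n : ℤ | 0 ≤ fInt a b c n ∧ fInt a b c n ≤ N ∧ Prime (fInt a b c n)}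

/-- `δ(x) = ∑_{x ≤ p ≤ A} λ(p)/p`. -/
def deltaSum (a b c N D : ℤ) (x : ℝ) : ℝ :=
  ∑ p ∈ (Finset.range (Acard a b c N + 1)).filter (fun p : ℕ => p.Prime ∧ x ≤ (p : ℝ)),
    (lamArith D p : ℝ) / p

/-- `β = -log(L(1,χ_D) · log|D|)`. -/
def betaE (D : ℤ) : ℝ := - Real.log (LOne D * Real.log |(D : ℝ)|)

/-- `g(Δ) = Δ e^{-β/2}` for `Δ > 0` and `|Δ|/(4|a| - e^{-β/2})` for `Δ < 0`. -/
def gDisc (a D : ℤ) : ℝ :=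
  if 0 < D then (D : ℝ) * Real.exp (-(betaE D) / 2)
  else |(D : ℝ)| / (4 * |(a : ℝ)| - Real.exp (-(betaE D) / 2))


-- ### Auxiliary lemmas ###

lemma kronecker_one' (D : ℤ) : kronecker D 1 = 1 := by simp [kronecker]

lemma kronecker_prime' (D : ℤ) {p : ℕ} (hp : p.Prime) :
    kronecker D p = kroneckerPrime D p := by
  simp [kronecker, hp.factorization, Finsupp.prod_single_index]

lemma kronecker_mul' (D : ℤ) {m n : ℕ} (hm : m ≠ 0) (hn : n ≠ 0) :
    kronecker D (m * n) = kronecker D m * kronecker D n := by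
  unfold kronecker
  rw [Nat.factorization_mul hm hn]
  exact Finsupp.prod_add_index' (fun p => pow_zero _) (fun p k1 k2 => pow_add _ _ _)

lemma lamArith_mul' (D : ℤ) {m n : ℕ} (hm : m ≠ 0) (hn : n ≠ 0) (h : Nat.Coprime m n) :
    lamArith D (m * n) = lamArith D m * lamArith D n := by
  let χ : ArithmeticFunction ℤ :=
    ⟨fun k => if k = 0 then 0 else kronecker D k, by simp⟩
  have hχ : χ.IsMultiplicative := by
    constructor
    · simp [χ, kronecker_one']
    · intro x y hxy
      rcases eq_or_ne x 0 with rfl | hx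
      · simp [χ]
      rcases eq_or_ne y 0 with rfl | hy
      · simp [χ]
      simp only [χ, ArithmeticFunction.coe_mk, if_neg hx, if_neg hy,
        if_neg (mul_ne_zero hx hy)]
      exact kronecker_mul' D hx hy
  have hz : (((ArithmeticFunction.zeta : ArithmeticFunction ℕ) :
      ArithmeticFunction ℤ) * χ).IsMultiplicative :=
    (ArithmeticFunction.isMultiplicative_zeta.natCast).mul hχ
  have key : ∀ k : ℕ, lamArith D k =
      (((ArithmeticFunction.zeta : ArithmeticFunction ℕ) : ArithmeticFunction ℤ) * χ) k := by
    intro k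
    rw [ArithmeticFunction.coe_zeta_mul_apply]
    apply Finset.sum_congr rfl
    intro d hd
    have : d ≠ 0 := (Nat.pos_of_mem_divisors hd).ne'
    simp [χ, this]
  rw [key, key, key, hz.map_mul_of_coprime h]

lemma lamArith_one' (D : ℤ) : lamArith D 1 = 1 := by
  simp [lamArith, Nat.divisors_one, kronecker_one']

lemma lamArith_prime' (D : ℤ) {p : ℕ} (hp : p.Prime) :
    lamArith D p = 1 + kroneckerPrime D p := by
  rw [lamArith, hp.divisors, Finset.sum_pair hp.one_lt.ne, kronecker_one',
    kronecker_prime' D hp]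

lemma one_add_kroneckerPrime_nonneg (D : ℤ) {p : ℕ} (hp : p.Prime) :
    (0:ℤ) ≤ 1 + kroneckerPrime D p := by
  rcases eq_or_ne p 2 with rfl | h2
  · simp only [kroneckerPrime, if_pos rfl]
    split_ifs <;> norm_num
  · simp only [kroneckerPrime, if_neg h2]
    rcases jacobiSym.trichotomy D p with h | h | h <;> rw [h] <;> norm_num

lemma rho_zmod (a b c : ℤ) (d : ℕ) [NeZero d] :
    rho a b c d = (Finset.univ.filter fun x : ZMod d =>
      (a : ZMod d) * x ^ 2 + (b : ZMod d) * x + (c : ZMod d) = 0).card := by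
  apply Finset.card_nbij' (fun n => ((n : ℕ) : ZMod d)) (fun x => x.val)
  · intro n hn
    simp only [Finset.mem_coe, Finset.mem_filter, Finset.mem_range, Finset.mem_univ, true_and] at hn ⊢
    have := (ZMod.intCast_zmod_eq_zero_iff_dvd (fInt a b c n) d).mpr hn.2
    push_cast [fInt] at this
    convert this using 2
  · intro x hx
    simp only [Finset.mem_coe, Finset.mem_filter, Finset.mem_univ, true_and, Finset.mem_range] at hx ⊢
    refine ⟨ZMod.val_lt x, ?_⟩
    rw [← ZMod.intCast_zmod_eq_zero_iff_dvd]
    push_cast [fInt]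
    rw [ZMod.natCast_rightInverse x]
    exact hx
  · intro n hn
    simp only [Finset.mem_coe, Finset.mem_filter, Finset.mem_range] at hn
    exact ZMod.val_cast_of_lt hn.1
  · intro x _
    exact ZMod.natCast_rightInverse x

lemma rho_mul' (a b c : ℤ) (m n : ℕ) (hm : m ≠ 0) (hn : n ≠ 0) (h : Nat.Coprime m n) :
    rho a b c (m * n) = rho a b c m * rho a b c n := by
  haveI : NeZero m := ⟨hm⟩
  haveI : NeZero n := ⟨hn⟩
  haveI : NeZero (m * n) := ⟨mul_ne_zero hm hn⟩
  let e := ZMod.chineseRemainder h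
  rw [rho_zmod, rho_zmod, rho_zmod]
  have key : ∀ x : ZMod (m * n),
      ((a : ZMod (m*n)) * x ^ 2 + b * x + c = 0) ↔
      ((a : ZMod m) * (e x).1 ^ 2 + b * (e x).1 + c = 0 ∧
       (a : ZMod n) * (e x).2 ^ 2 + b * (e x).2 + c = 0) := by
    intro x
    rw [← map_eq_zero_iff (e : ZMod (m*n) →+* ZMod m × ZMod n) e.injective]
    simp [Prod.ext_iff]
  have : (Finset.univ.filter fun x : ZMod (m*n) =>
      (a : ZMod (m*n)) * x ^ 2 + (b : ZMod (m*n)) * x + (c : ZMod (m*n)) = 0).card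
      = (Finset.univ.filter fun y : ZMod m × ZMod n =>
        ((a : ZMod m) * y.1 ^ 2 + b * y.1 + c = 0 ∧
         (a : ZMod n) * y.2 ^ 2 + b * y.2 + c = 0)).card := by
    apply Finset.card_nbij (fun x => e x)
    · intro x hx
      simp only [Finset.mem_coe, Finset.mem_filter, Finset.mem_univ, true_and] at hx ⊢
      exact (key x).mp hx
    · intro x _ y _ hxy
      exact e.injective hxy
    · intro y hy
      simp only [Finset.coe_filter, Finset.mem_univ, true_and, Set.mem_image,
        Set.mem_setOf_eq] at hy ⊢
      exact ⟨e.symm y, by rw [key, e.apply_symm_apply]; exact hy, e.apply_symm_apply y⟩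
  rw [this, ← Finset.univ_product_univ,
    Finset.filter_product (fun u : ZMod m => (a : ZMod m) * u ^ 2 + b * u + c = 0)
      (fun u : ZMod n => (a : ZMod n) * u ^ 2 + b * u + c = 0),
    Finset.card_product]

lemma rho_one' (a b c : ℤ) : rho a b c 1 = 1 := by
  simp [rho]

lemma not_all_zero (a b c : ℤ) (hgcd : Int.gcd a (Int.gcd b c) = 1) (p : ℕ) (hp : p.Prime)
    (hA : (a : ZMod p) = 0) (hB : (b : ZMod p) = 0) : (c : ZMod p) ≠ 0 := by
  intro hC
  have da : (p : ℤ) ∣ a := (ZMod.intCast_zmod_eq_zero_iff_dvd a p).mp hA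
  have db : (p : ℤ) ∣ b := (ZMod.intCast_zmod_eq_zero_iff_dvd b p).mp hB
  have dc : (p : ℤ) ∣ c := (ZMod.intCast_zmod_eq_zero_iff_dvd c p).mp hC
  have h1 : (p : ℤ) ∣ Int.gcd b c := Int.dvd_coe_gcd db dc
  have h2 : (p : ℤ) ∣ Int.gcd a (Int.gcd b c) := Int.dvd_coe_gcd da h1
  rw [hgcd] at h2
  have := Int.le_of_dvd one_pos h2
  have := hp.two_le
  omega

lemma card_roots_le (a b c : ℤ) (p : ℕ) [NeZero p] (hp : p.Prime)
    (hne : ¬ ((a : ZMod p) = 0 ∧ (b : ZMod p) = 0 ∧ (c : ZMod p) = 0)) :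
    (Finset.univ.filter fun x : ZMod p =>
      (a : ZMod p) * x ^ 2 + (b : ZMod p) * x + (c : ZMod p) = 0).card ≤ 2 := by
  haveI : Fact p.Prime := ⟨hp⟩
  set g : Polynomial (ZMod p) :=
    Polynomial.C (a : ZMod p) * Polynomial.X ^ 2 + Polynomial.C (b : ZMod p) * Polynomial.X
      + Polynomial.C (c : ZMod p) with hg
  have hg0 : g ≠ 0 := by
    intro h0
    apply hne
    have e2 := congrArg (fun q => Polynomial.coeff q 2) h0
    have e1 := congrArg (fun q => Polynomial.coeff q 1) h0
    have e0 := congrArg (fun q => Polynomial.coeff q 0) h0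
    simp only [hg, Polynomial.coeff_add, Polynomial.coeff_C_mul, Polynomial.coeff_X_pow,
      Polynomial.coeff_X, Polynomial.coeff_C, Polynomial.coeff_zero] at e2 e1 e0
    norm_num at e2 e1 e0
    exact ⟨e2, e1, e0⟩
  have hsub : (Finset.univ.filter fun x : ZMod p =>
      (a : ZMod p) * x ^ 2 + (b : ZMod p) * x + (c : ZMod p) = 0) ⊆ g.roots.toFinset := by
    intro x hx
    simp only [Finset.mem_filter, Finset.mem_univ, true_and] at hx
    rw [Multiset.mem_toFinset, Polynomial.mem_roots hg0]
    simpa [hg, Polynomial.IsRoot, Polynomial.eval_add] using hx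
  exact (Finset.card_le_card hsub).trans ((g.roots.toFinset_card_le).trans
    ((Polynomial.card_roots' g).trans Polynomial.natDegree_quadratic_le))

lemma rho_odd_prime_le (a b c D : ℤ) (hgcd : Int.gcd a (Int.gcd b c) = 1)
    (hD : D = b ^ 2 - 4 * a * c) (p : ℕ) (hp : p.Prime) (hp2 : p ≠ 2) :
    (rho a b c p : ℤ) ≤ 1 + jacobiSym D p := by
  haveI : Fact p.Prime := ⟨hp⟩
  haveI : NeZero p := ⟨hp.ne_zero⟩
  have hJ : legendreSym p D = jacobiSym D p := jacobiSym.legendreSym.to_jacobiSym p D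
  have hDbar : (D : ZMod p) = (b : ZMod p) ^ 2 - 4 * a * c := by
    rw [hD]; push_cast; ring
  have htwo : (2 : ZMod p) ≠ 0 := by
    have : ((2 : ℕ) : ZMod p) ≠ 0 := by
      rw [Ne, ZMod.natCast_eq_zero_iff]
      exact fun h => hp2 ((Nat.prime_dvd_prime_iff_eq hp Nat.prime_two).mp h)
    simpa using this
  rw [rho_zmod]
  rcases jacobiSym.trichotomy D p with h0 | h1 | hm1
  · rw [h0]
    have hD0 : (D : ZMod p) = 0 := (legendreSym.eq_zero_iff p D).mp (by rw [hJ, h0])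
    by_cases hA : (a : ZMod p) = 0
    · have hb2 : (b : ZMod p) ^ 2 = 0 := by
        have := hDbar; rw [hD0, hA] at this; linear_combination -this
      have hB : (b : ZMod p) = 0 := pow_eq_zero_iff (n := 2) (by norm_num) |>.mp hb2
      have hC := not_all_zero a b c hgcd p hp hA hB
      have : (Finset.univ.filter fun x : ZMod p =>
          (a : ZMod p) * x ^ 2 + (b : ZMod p) * x + (c : ZMod p) = 0) = ∅ := by
        rw [Finset.filter_eq_empty_iff]
        intro x _
        rw [hA, hB]
        simpa using hC
      rw [this]
      simp
    · have hcard : (Finset.univ.filter fun x : ZMod p =>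
          (a : ZMod p) * x ^ 2 + (b : ZMod p) * x + (c : ZMod p) = 0).card ≤ 1 := by
        apply Finset.card_le_one.mpr
        intro x hx y hy
        simp only [Finset.mem_filter, Finset.mem_univ, true_and] at hx hy
        have keyx : (2 * a * x + b) ^ 2 = 0 := by
          have h4 : (b : ZMod p) ^ 2 - 4 * a * c = 0 := by rw [← hDbar, hD0]
          linear_combination 4 * (a : ZMod p) * hx + h4
        have keyy : (2 * a * y + b) ^ 2 = 0 := by
          have h4 : (b : ZMod p) ^ 2 - 4 * a * c = 0 := by rw [← hDbar, hD0]
          linear_combination 4 * (a : ZMod p) * hy + h4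
        have hx0 : 2 * (a : ZMod p) * x + b = 0 :=
          pow_eq_zero_iff (n := 2) (by norm_num) |>.mp keyx
        have hy0 : 2 * (a : ZMod p) * y + b = 0 :=
          pow_eq_zero_iff (n := 2) (by norm_num) |>.mp keyy
        have h2a : 2 * (a : ZMod p) ≠ 0 := mul_ne_zero htwo hA
        have : 2 * (a : ZMod p) * x = 2 * (a : ZMod p) * y := by
          linear_combination hx0 - hy0
        exact mul_left_cancel₀ h2a this
      exact_mod_cast Nat.cast_le.mpr hcard
  · rw [h1]
    have hne : ¬ ((a : ZMod p) = 0 ∧ (b : ZMod p) = 0 ∧ (c : ZMod p) = 0) := by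
      rintro ⟨hA, hB, hC⟩
      exact not_all_zero a b c hgcd p hp hA hB hC
    have := card_roots_le a b c p hp hne
    exact_mod_cast Nat.cast_le.mpr this
  · rw [hm1]
    have hns : ¬ IsSquare ((D : ZMod p)) := by
      rw [← legendreSym.eq_neg_one_iff p, hJ]
      exact hm1
    have : (Finset.univ.filter fun x : ZMod p =>
        (a : ZMod p) * x ^ 2 + (b : ZMod p) * x + (c : ZMod p) = 0) = ∅ := by
      rw [Finset.filter_eq_empty_iff]
      intro x _ hx
      exact hns ⟨2 * a * x + b, by rw [hDbar]; linear_combination -(4 * (a : ZMod p) * hx)⟩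
    rw [this]
    simp

lemma rho_two' (a b c : ℤ) :
    rho a b c 2 = (if (2:ℤ) ∣ c then 1 else 0) + (if (2:ℤ) ∣ (a + b + c) then 1 else 0) := by
  have hr : Finset.range 2 = {0, 1} := by decide
  have e0 : fInt a b c ((0:ℕ):ℤ) = c := by unfold fInt; push_cast; ring
  have e1 : fInt a b c ((1:ℕ):ℤ) = a + b + c := by unfold fInt; push_cast; ring
  rw [rho, hr, Finset.filter_insert, Finset.filter_singleton, e0, e1]
  by_cases hc : (2:ℤ) ∣ c <;> by_cases habc : (2:ℤ) ∣ (a + b + c) <;>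
    simp [hc, habc]

lemma odd_sq_mod8 {b : ℤ} (hb : ¬ (2 ∣ b)) : b ^ 2 % 8 = 1 := by
  obtain ⟨k, hk⟩ : ∃ k, b = 2 * k + 1 := ⟨(b-1)/2, by omega⟩
  have h1 : b ^ 2 = 4 * (k * (k + 1)) + 1 := by rw [hk]; ring
  have h2 : (2:ℤ) ∣ k * (k + 1) := (Int.even_mul_succ_self k).two_dvd
  obtain ⟨m, hm⟩ := h2
  omega

lemma Dmod_key (a b c D : ℤ) (hD : D = b ^ 2 - 4 * a * c) (hac : (2:ℤ) ∣ a * c ∨ (2:ℤ) ∣ b) :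
    D % 2 = 0 ∨ D % 8 = 1 := by
  replace hD : D = b ^ 2 - 4 * (a * c) := by rw [hD]; ring
  obtain ⟨AC, hAC⟩ : ∃ j, a * c = j := ⟨a*c, rfl⟩
  rw [hAC] at hD hac
  by_cases hb : (2:ℤ) ∣ b
  · left
    obtain ⟨k, hbk⟩ := hb
    have hbb : b ^ 2 = 2 * (2 * (k * k)) := by rw [hbk]; ring
    obtain ⟨K, hK⟩ : ∃ K, k * k = K := ⟨k*k, rfl⟩
    rw [hK] at hbb
    omega
  · right
    have hb8 := odd_sq_mod8 hb
    obtain ⟨B, hB⟩ : ∃ B, b ^ 2 = B := ⟨_, rfl⟩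
    rw [hB] at hb8 hD
    rcases hac with hac | hac
    · obtain ⟨j, hj⟩ := hac; omega
    · exact absurd hac hb

lemma rho_two_le (a b c D : ℤ) (hpar : Odd (a + b) ∨ Odd c)
    (hD : D = b ^ 2 - 4 * a * c) :
    (rho a b c 2 : ℤ) ≤ 1 + kroneckerPrime D 2 := by
  have hk : kroneckerPrime D 2 =
      (if D % 2 = 0 then 0 else if D % 8 = 1 ∨ D % 8 = 7 then 1 else -1) := by
    simp [kroneckerPrime]
  rw [rho_two', hk]
  by_cases hc : (2:ℤ) ∣ c <;> by_cases habc : (2:ℤ) ∣ (a + b + c)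
  · exfalso
    rcases hpar with h | h
    · obtain ⟨k, hk'⟩ := h; omega
    · obtain ⟨k, hk'⟩ := h; omega
  · have hkey := Dmod_key a b c D hD (Or.inl (Dvd.dvd.mul_left hc a))
    simp only [if_pos hc, if_neg habc]
    rcases hkey with h | h
    · simp [h]
    · have hodd : ¬ (D % 2 = 0) := by omega
      simp [hodd, h]
  · have hac : (2:ℤ) ∣ a * c ∨ (2:ℤ) ∣ b := by
      by_cases hb : (2:ℤ) ∣ b
      · exact Or.inr hb
      · left
        have hA : (2:ℤ) ∣ a := by
          obtain ⟨k, hk2⟩ := habc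
          rcases Int.even_or_odd a with he | ho
          · exact he.two_dvd
          · exfalso; obtain ⟨m, hm⟩ := ho
            rcases Int.even_or_odd b with he2 | ho2
            · exact hb he2.two_dvd
            · obtain ⟨m2, hm2⟩ := ho2
              rcases Int.even_or_odd c with he3 | ho3
              · obtain ⟨m3,hm3⟩ := he3; omega
              · obtain ⟨m3,hm3⟩ := ho3; omega
        exact Dvd.dvd.mul_right hA c
    have hkey := Dmod_key a b c D hD hac
    simp only [if_neg hc, if_pos habc]
    rcases hkey with h | h
    · simp [h]
    · have hodd : ¬ (D % 2 = 0) := by omega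
      simp [hodd, h]
  · simp only [if_neg hc, if_neg habc]
    split
    · norm_num
    · split <;> norm_num

theorem rho_le_lambda (a b c D : ℤ)
    (ha : a ≠ 0) (hgcd : Int.gcd a (Int.gcd b c) = 1)
    (hpar : Odd (a + b) ∨ Odd c)
    (hD : D = b ^ 2 - 4 * a * c) (hsq : ¬ IsSquare D)
    (d : ℕ) (hd : 0 < d) (hsf : Squarefree d) :
    (rho a b c d : ℤ) ≤ lamArith D d := by
  clear hsq ha
  induction d using Nat.strong_induction_on with
  | _ d ih =>
  rcases eq_or_ne d 1 with rfl | hd1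
  · rw [rho_one', lamArith_one']; norm_num
  · set p := d.minFac with hpdef
    have hp : p.Prime := Nat.minFac_prime hd1
    have hpd : p ∣ d := Nat.minFac_dvd d
    set m := d / p with hmdef
    have hdm : d = p * m := (Nat.mul_div_cancel' hpd).symm
    have hm0 : 0 < m := Nat.div_pos (Nat.minFac_le hd) hp.pos
    have hmlt : m < d := Nat.div_lt_self hd hp.one_lt
    have hcop : Nat.Coprime p m := by
      by_contra h
      have hg : Nat.gcd p m = p :=
        (hp.eq_one_or_self_of_dvd _ (Nat.gcd_dvd_left p m)).resolve_left h
      have hpm : p ∣ m := hg ▸ Nat.gcd_dvd_right p m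
      obtain ⟨k, hk⟩ := hpm
      have hsq2 : p * p ∣ d := ⟨k, by rw [hdm, hk]; ring⟩
      exact hp.one_lt.ne' (Nat.isUnit_iff.mp (hsf p hsq2))
    have hsfm : Squarefree m := hsf.squarefree_of_dvd ⟨p, by rw [hdm]; ring⟩
    have hrho : rho a b c d = rho a b c p * rho a b c m := by
      rw [hdm]; exact rho_mul' a b c p m hp.ne_zero hm0.ne' hcop
    have hlam : lamArith D d = lamArith D p * lamArith D m := by
      rw [hdm]; exact lamArith_mul' D hp.ne_zero hm0.ne' hcop
    have h1 : (rho a b c p : ℤ) ≤ lamArith D p := by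
      rw [lamArith_prime' D hp]
      rcases eq_or_ne p 2 with h2 | h2
      · rw [h2]; exact rho_two_le a b c D hpar hD
      · have h := rho_odd_prime_le a b c D hgcd hD p hp h2
        rwa [show kroneckerPrime D p = jacobiSym D p by simp [kroneckerPrime, h2]]
    have h2' : (rho a b c m : ℤ) ≤ lamArith D m := ih m hmlt hm0 hsfm
    have hnn : (0:ℤ) ≤ (rho a b c m : ℤ) := Int.natCast_nonneg _
    have hlamp_nn : (0:ℤ) ≤ lamArith D p := by
      rw [lamArith_prime' D hp]; exact one_add_kroneckerPrime_nonneg D hp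
    calc (rho a b c d : ℤ) = (rho a b c p : ℤ) * (rho a b c m : ℤ) := by
          rw [hrho]; push_cast; ring
      _ ≤ lamArith D p * lamArith D m :=
          mul_le_mul h1 h2' hnn hlamp_nn
      _ = lamArith D d := hlam.symm
end
end

section
/- Let f be a quadratic polynomial as in the context and N ≥ 1 an integer. For every positive integer d, |A_d − (ρ(d)/d)·A| ≤ 2·ρ(d); that is, the number of integers n with 0 ≤ f(n) ≤ N and d | f(n) equals (ρ(d)/d)·A up to an error of absolute value at most 2ρ(d). -/
open Finset

noncomputable section

section AuxAdAsymptotic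

private lemma fInt_sub_dvd' (a b c : ℤ) {e m n : ℤ} (h : e ∣ m - n) :
    e ∣ fInt a b c m - fInt a b c n := by
  have hid : fInt a b c m - fInt a b c n = (m - n) * (a * (m + n) + b) := by
    simp only [fInt]; ring
  rw [hid]; exact h.mul_right _

private lemma dvd_f_iff' (a b c : ℤ) {e m n : ℤ} (h : e ∣ m - n) :
    (e ∣ fInt a b c m ↔ e ∣ fInt a b c n) := by
  have h2 := fInt_sub_dvd' a b c h
  constructor <;> intro hh
  · have h3 := dvd_sub hh h2
    simpa using h3
  · have h3 := dvd_add hh h2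
    simpa using h3

private lemma modsub' (d x : ℤ) : d ∣ x - x % d := ⟨x / d, by rw [Int.emod_def]; ring⟩
private lemma modsub'' (d x : ℤ) : d ∣ x % d - x := ⟨-(x / d), by rw [Int.emod_def]; ring⟩

private lemma small_card_le' (a b c : ℤ) (d : ℕ) (hd : 0 < d) (u v : ℤ) (hlen : v < u + d) :
    ((Finset.Icc u v).filter fun n => (d:ℤ) ∣ fInt a b c n).card ≤ rho a b c d := by
  have hd' : (0:ℤ) < d := by exact_mod_cast hd
  apply Finset.card_le_card_of_injOn (fun n : ℤ => (n % (d:ℤ)).toNat)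
  · intro n hn
    simp only [Finset.mem_coe, Finset.mem_filter, Finset.mem_Icc] at hn
    simp only [rho, Finset.mem_coe, Finset.mem_filter, Finset.mem_range]
    have h0 : 0 ≤ n % d := Int.emod_nonneg n (by omega)
    have h1 : n % d < d := Int.emod_lt_of_pos n hd'
    constructor
    · omega
    · rw [show (((n % (d:ℤ)).toNat : ℤ)) = n % d by omega]
      exact (dvd_f_iff' a b c (modsub'' (d:ℤ) n)).2 hn.2
  · intro n1 h1 n2 h2 heq
    simp only [Finset.coe_filter, Set.mem_setOf_eq, Finset.mem_Icc] at h1 h2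
    have e0 : 0 ≤ n1 % d := Int.emod_nonneg n1 (by omega)
    have e1 : 0 ≤ n2 % d := Int.emod_nonneg n2 (by omega)
    have heqb : (n1 % (d:ℤ)).toNat = (n2 % (d:ℤ)).toNat := heq
    have heq' : n1 % (d:ℤ) = n2 % d := by omega
    obtain ⟨k1, hk1⟩ := modsub' (d:ℤ) n1
    obtain ⟨k2, hk2⟩ := modsub' (d:ℤ) n2
    have hk : n1 - n2 = d * (k1 - k2) := by linear_combination hk1 - hk2 + heq'
    have hb1 : n1 - n2 < d := by omega
    have hb2 : -(d:ℤ) < n1 - n2 := by omega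
    have hk1' : k1 - k2 < 1 := by nlinarith
    have hk2' : -1 < k1 - k2 := by nlinarith
    have : k1 - k2 = 0 := by omega
    rw [this, mul_zero] at hk; omega

private lemma window_card' (a b c : ℤ) (d : ℕ) (hd : 0 < d) (u : ℤ) :
    ((Finset.Icc u (u + d - 1)).filter fun n => (d:ℤ) ∣ fInt a b c n).card
      = rho a b c d := by
  have hd' : (0:ℤ) < d := by exact_mod_cast hd
  rw [rho]
  apply Finset.card_bij' (fun (n : ℤ) _ => ((n % (d:ℤ)).toNat : ℕ))
    (fun (k : ℕ) _ => u + ((k : ℤ) - u) % d)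
  · intro n hn
    simp only [Finset.mem_filter, Finset.mem_Icc] at hn ⊢
    simp only [Finset.mem_range]
    have h0 : 0 ≤ n % d := Int.emod_nonneg n (by omega)
    have h1 : n % d < d := Int.emod_lt_of_pos n hd'
    constructor
    · omega
    · rw [show (((n % (d:ℤ)).toNat : ℤ)) = n % d by omega]
      exact (dvd_f_iff' a b c (modsub'' (d:ℤ) n)).2 hn.2
  · intro k hk
    simp only [Finset.mem_filter, Finset.mem_range] at hk
    simp only [Finset.mem_filter, Finset.mem_Icc]
    have h0 : 0 ≤ ((k:ℤ) - u) % d := Int.emod_nonneg _ (by omega)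
    have h1 : ((k:ℤ) - u) % d < d := Int.emod_lt_of_pos _ hd'
    refine ⟨⟨by omega, by omega⟩, ?_⟩
    obtain ⟨t, ht⟩ := modsub'' (d:ℤ) ((k:ℤ) - u)
    have hdv : (d:ℤ) ∣ (u + ((k:ℤ) - u) % d) - k :=
      ⟨t, by linear_combination ht⟩
    exact (dvd_f_iff' a b c hdv).2 hk.2
  · intro n hn
    simp only [Finset.mem_filter, Finset.mem_Icc] at hn
    have h0 : 0 ≤ n % d := Int.emod_nonneg n (by omega)
    have h1 : n % d < d := Int.emod_lt_of_pos n hd'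
    have hc : (((n % (d:ℤ)).toNat : ℤ)) = n % d := by omega
    rw [hc]
    have hmod : (n % (d:ℤ) - u) % d = (n - u) % d := by
      rw [Int.sub_emod, Int.emod_emod_of_dvd _ dvd_rfl, ← Int.sub_emod]
    have h2 : (n - u) % d = n - u := Int.emod_eq_of_lt (by omega) (by omega)
    omega
  · intro k hk
    simp only [Finset.mem_filter, Finset.mem_range] at hk
    have h0 : 0 ≤ ((k:ℤ) - u) % d := Int.emod_nonneg _ (by omega)
    have h1 : ((k:ℤ) - u) % d < d := Int.emod_lt_of_pos _ hd'
    have hmod : (u + ((k:ℤ) - u) % d) % d = (k:ℤ) % d := by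
      rw [Int.add_emod, Int.emod_emod_of_dvd _ dvd_rfl, ← Int.add_emod]
      congr 1; ring
    have h2 : ((k:ℤ)) % d = k := Int.emod_eq_of_lt (by omega) (by exact_mod_cast hk.1)
    omega

private lemma interval_est' (a b c : ℤ) (d : ℕ) (hd : 0 < d) :
    ∀ k : ℕ, ∀ u v : ℤ, (Finset.Icc u v).card ≤ k →
      |((((Finset.Icc u v).filter fun n => (d:ℤ) ∣ fInt a b c n).card : ℝ))
        - (rho a b c d : ℝ) / d * ((Finset.Icc u v).card : ℝ)| ≤ (rho a b c d : ℝ) := by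
  have hd' : (0:ℝ) < d := by exact_mod_cast hd
  intro k
  induction k with
  | zero =>
    intro u v hk
    have hL : (Finset.Icc u v).card ≤ d := by omega
    have hC := small_card_le' a b c d hd u v (by rw [Int.card_Icc] at hL; omega)
    have h0 : (0:ℝ) ≤ (((Finset.Icc u v).filter fun n => (d:ℤ) ∣ fInt a b c n).card : ℝ) := by positivity
    have hLd : ((Finset.Icc u v).card : ℝ) ≤ (d : ℝ) := by exact_mod_cast hL
    have hL0 : (0:ℝ) ≤ ((Finset.Icc u v).card : ℝ) := by positivity
    have hC' : (((Finset.Icc u v).filter fun n => (d:ℤ) ∣ fInt a b c n).card : ℝ) ≤ (rho a b c d : ℝ) := by exact_mod_cast hC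
    have hr0 : (0:ℝ) ≤ (rho a b c d : ℝ) := by positivity
    have hq1 : (0:ℝ) ≤ (rho a b c d : ℝ) / d * ((Finset.Icc u v).card : ℝ) := by positivity
    have hq2 : (rho a b c d : ℝ) / d * ((Finset.Icc u v).card : ℝ) ≤ (rho a b c d : ℝ) := by
      have h9 := mul_le_mul_of_nonneg_left hLd (div_nonneg hr0 hd'.le)
      rwa [div_mul_cancel₀ _ (ne_of_gt hd')] at h9
    rw [abs_le]
    constructor
    · linarith
    · linarith
  | succ k ih =>
    intro u v hk
    by_cases hL : (Finset.Icc u v).card ≤ d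
    · have hC := small_card_le' a b c d hd u v (by rw [Int.card_Icc] at hL; omega)
      have h0 : (0:ℝ) ≤ (((Finset.Icc u v).filter fun n => (d:ℤ) ∣ fInt a b c n).card : ℝ) := by positivity
      have hLd : ((Finset.Icc u v).card : ℝ) ≤ (d : ℝ) := by exact_mod_cast hL
      have hL0 : (0:ℝ) ≤ ((Finset.Icc u v).card : ℝ) := by positivity
      have hC' : (((Finset.Icc u v).filter fun n => (d:ℤ) ∣ fInt a b c n).card : ℝ) ≤ (rho a b c d : ℝ) := by exact_mod_cast hC
      have hr0 : (0:ℝ) ≤ (rho a b c d : ℝ) := by positivity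
      have hq1 : (0:ℝ) ≤ (rho a b c d : ℝ) / d * ((Finset.Icc u v).card : ℝ) := by positivity
      have hq2 : (rho a b c d : ℝ) / d * ((Finset.Icc u v).card : ℝ) ≤ (rho a b c d : ℝ) := by
        have h9 := mul_le_mul_of_nonneg_left hLd (div_nonneg hr0 hd'.le)
        rwa [div_mul_cancel₀ _ (ne_of_gt hd')] at h9
      rw [abs_le]
      constructor
      · linarith
      · linarith
    · push_neg at hL
      have hvu : u + d ≤ v + 1 := by rw [Int.card_Icc] at hL; omega
      have hsplit : Finset.Icc u v = Finset.Icc u (u + d - 1) ∪ Finset.Icc (u + d) v := by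
        ext n; simp only [Finset.mem_Icc, Finset.mem_union]; omega
      have hdisj : Disjoint (Finset.Icc u (u + d - 1)) (Finset.Icc (u + d) v) := by
        simp only [Finset.disjoint_left, Finset.mem_Icc]
        intro n h1 h2; omega
      have hcard : (Finset.Icc u v).card = d + (Finset.Icc (u + d) v).card := by
        rw [hsplit, Finset.card_union_of_disjoint hdisj, Int.card_Icc, Int.card_Icc]
        omega
      have hfilt : ((Finset.Icc u v).filter fun n => (d:ℤ) ∣ fInt a b c n).card
          = rho a b c d + ((Finset.Icc (u+d) v).filter fun n => (d:ℤ) ∣ fInt a b c n).card := by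
        rw [hsplit, Finset.filter_union,
          Finset.card_union_of_disjoint (Finset.disjoint_filter_filter hdisj),
          window_card' a b c d hd u]
      have hk' : (Finset.Icc (u + d) v).card ≤ k := by omega
      have ihe := ih (u + d) v hk'
      rw [hcard, hfilt]
      push_cast
      have heq : ((rho a b c d : ℝ) + (((Finset.Icc (u+d) v).filter fun n => (d:ℤ) ∣ fInt a b c n).card : ℝ))
          - (rho a b c d : ℝ) / d * ((d:ℝ) + ((Finset.Icc (u+d) v).card : ℝ))
          = (((Finset.Icc (u+d) v).filter fun n => (d:ℤ) ∣ fInt a b c n).card : ℝ)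
            - (rho a b c d : ℝ) / d * ((Finset.Icc (u+d) v).card : ℝ) := by
        field_simp
        ring
      rw [heq]
      exact ihe

private lemma conv_le' (a b c : ℤ) (ha : 0 < a) {m n p K : ℤ}
    (h1 : m ≤ n) (h2 : n ≤ p) (hm : fInt a b c m ≤ K) (hp : fInt a b c p ≤ K) :
    fInt a b c n ≤ K := by
  rcases eq_or_lt_of_le (h1.trans h2) with heq | hlt
  · have : n = m := le_antisymm (heq ▸ h2) h1
    exact this ▸ hm
  · have hpos : (0:ℤ) < p - m := by omega
    have h3 : (0:ℤ) ≤ a * ((n - m) * ((p - n) * (p - m))) :=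
      mul_nonneg ha.le (mul_nonneg (by omega) (mul_nonneg (by omega) (by omega)))
    have h4 : (p - n) * fInt a b c m ≤ (p - n) * K :=
      mul_le_mul_of_nonneg_left hm (by omega)
    have h5 : (n - m) * fInt a b c p ≤ (n - m) * K :=
      mul_le_mul_of_nonneg_left hp (by omega)
    have key : (p - m) * fInt a b c n ≤ (p - m) * K := by
      simp only [fInt] at *
      nlinarith [h3, h4, h5]
    exact le_of_mul_le_mul_left key hpos

private lemma fInt_neg' (a b c n : ℤ) : fInt (-a) (-b) (-c) n = -(fInt a b c n) := by
  simp only [fInt]; ring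

private lemma G_convex' (a b c N : ℤ) (ha : a ≠ 0) {u v m n p : ℤ}
    (hPu : 0 ≤ fInt a b c u ∧ fInt a b c u ≤ N)
    (hPv : 0 ≤ fInt a b c v ∧ fInt a b c v ≤ N)
    (hum : u ≤ m) (hmn : m ≤ n) (hnp : n ≤ p) (hpv : p ≤ v)
    (hm : ¬(0 ≤ fInt a b c m ∧ fInt a b c m ≤ N))
    (hp : ¬(0 ≤ fInt a b c p ∧ fInt a b c p ≤ N)) :
    ¬(0 ≤ fInt a b c n ∧ fInt a b c n ≤ N) := by
  rcases lt_or_gt_of_ne ha with hneg | hpos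
  · have conv : ∀ {m' n' p' K : ℤ}, m' ≤ n' → n' ≤ p' → K ≤ fInt a b c m' → K ≤ fInt a b c p' →
        K ≤ fInt a b c n' := by
      intro m' n' p' K h1 h2 hm' hp'
      have h3 := conv_le' (-a) (-b) (-c) (by omega) h1 h2
        (show fInt (-a) (-b) (-c) m' ≤ -K by rw [fInt_neg']; omega)
        (show fInt (-a) (-b) (-c) p' ≤ -K by rw [fInt_neg']; omega)
      rw [fInt_neg'] at h3; omega
    have h0m : (0:ℤ) ≤ fInt a b c m := conv hum (le_trans hmn (le_trans hnp hpv)) hPu.1 hPv.1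
    have h0p : (0:ℤ) ≤ fInt a b c p := conv (le_trans hum (le_trans hmn hnp)) hpv hPu.1 hPv.1
    have hmN : N + 1 ≤ fInt a b c m := by by_contra hcon; exact hm ⟨h0m, by omega⟩
    have hpN : N + 1 ≤ fInt a b c p := by by_contra hcon; exact hp ⟨h0p, by omega⟩
    have hnN := conv hmn hnp hmN hpN
    intro hcon; omega
  · have conv : ∀ {m' n' p' K : ℤ}, m' ≤ n' → n' ≤ p' → fInt a b c m' ≤ K → fInt a b c p' ≤ K →
        fInt a b c n' ≤ K := fun h1 h2 hm' hp' => conv_le' a b c hpos h1 h2 hm' hp'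
    have hNm : fInt a b c m ≤ N := conv hum (le_trans hmn (le_trans hnp hpv)) hPu.2 hPv.2
    have hNp : fInt a b c p ≤ N := conv (le_trans hum (le_trans hmn hnp)) hpv hPu.2 hPv.2
    have hm0 : fInt a b c m ≤ -1 := by by_contra hcon; exact hm ⟨by omega, hNm⟩
    have hp0 : fInt a b c p ≤ -1 := by by_contra hcon; exact hp ⟨by omega, hNp⟩
    have hn0 := conv hmn hnp hm0 hp0
    intro hcon; omega

private lemma bound_mem' (a b c N : ℤ) (ha : a ≠ 0) (hN : 1 ≤ N) {n : ℤ}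
    (h0 : 0 ≤ fInt a b c n) (hfN : fInt a b c n ≤ N) :
    -(|b| + |c| + N + 1) ≤ n ∧ n ≤ |b| + |c| + N + 1 := by
  have habs : |n| ≤ |b| + |c| + N + 1 := by
    by_contra hcon
    push_neg at hcon
    have hb0 := abs_nonneg b
    have hc0 := abs_nonneg c
    have hm1 : |b| + |c| + N + 2 ≤ |n| := by omega
    have hm0 : (1:ℤ) ≤ |n| := by omega
    have hmm : (|b| + |c| + N + 2) * |n| ≤ |n| * |n| :=
      mul_le_mul_of_nonneg_right hm1 (abs_nonneg n)
    have hx : |c| + N + 2 ≤ (|c| + N + 2) * |n| := le_mul_of_one_le_right (by omega) hm0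
    have hn2 : n ^ 2 = |n| * |n| := by rw [← sq_abs n]; ring
    have hbn1 : -(|b| * |n|) ≤ b * n := by
      have h := neg_abs_le (b * n); rwa [abs_mul] at h
    have hbn2 : b * n ≤ |b| * |n| := by
      have h := le_abs_self (b * n); rwa [abs_mul] at h
    have hcc : -|c| ≤ c := neg_abs_le c
    have hcc' : c ≤ |c| := le_abs_self c
    rcases lt_or_gt_of_ne ha with hneg | hpos
    · have ha1 : a ≤ -1 := by omega
      have han : a * n ^ 2 ≤ -1 * n ^ 2 := mul_le_mul_of_nonneg_right ha1 (sq_nonneg n)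
      simp only [fInt] at h0
      linarith
    · have ha1 : (1:ℤ) ≤ a := by omega
      have han : 1 * n ^ 2 ≤ a * n ^ 2 := mul_le_mul_of_nonneg_right ha1 (sq_nonneg n)
      simp only [fInt] at hfN
      linarith
  constructor
  · linarith [neg_abs_le n]
  · linarith [le_abs_self n]

end AuxAdAsymptotic


theorem Ad_asymptotic (a b c D N : ℤ)
    (ha : a ≠ 0) (hgcd : Int.gcd a (Int.gcd b c) = 1)
    (hpar : Odd (a + b) ∨ Odd c)
    (hD : D = b ^ 2 - 4 * a * c) (hsq : ¬ IsSquare D)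
    (hN : 1 ≤ N) (d : ℕ) (hd : 0 < d) :
    |(Adcard a b c N d : ℝ) - (rho a b c d : ℝ) / d * (Acard a b c N : ℝ)| ≤
      2 * (rho a b c d : ℝ) := by
  classical
  have hd' : (0:ℝ) < d := by exact_mod_cast hd
  have hr0 : (0:ℝ) ≤ (rho a b c d : ℝ) := by positivity
  set M : ℤ := |b| + |c| + N + 1 with hM
  set F : Finset ℤ := (Finset.Icc (-M) M).filter
      (fun n => 0 ≤ fInt a b c n ∧ fInt a b c n ≤ N) with hFdef
  have hmemF : ∀ n : ℤ, n ∈ F ↔ (0 ≤ fInt a b c n ∧ fInt a b c n ≤ N) := by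
    intro n
    constructor
    · intro h; exact (Finset.mem_filter.1 h).2
    · intro h
      refine Finset.mem_filter.2 ⟨Finset.mem_Icc.2 ?_, h⟩
      exact bound_mem' a b c N ha hN h.1 h.2
  have hA : Acard a b c N = F.card := by
    have hset : {n : ℤ | 0 ≤ fInt a b c n ∧ fInt a b c n ≤ N} = (F : Set ℤ) := by
      ext n; simp only [Set.mem_setOf_eq, Finset.mem_coe]; exact (hmemF n).symm
    rw [Acard, hset, Set.ncard_coe_finset]
  have hAd : Adcard a b c N d = (F.filter (fun n => (d:ℤ) ∣ fInt a b c n)).card := by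
    have hset : {n : ℤ | 0 ≤ fInt a b c n ∧ fInt a b c n ≤ N ∧ (d:ℤ) ∣ fInt a b c n}
        = ((F.filter (fun n => (d:ℤ) ∣ fInt a b c n)) : Set ℤ) := by
      ext n
      simp only [Set.mem_setOf_eq, Finset.mem_coe, Finset.mem_filter, hmemF n]
      tauto
    rw [Adcard, hset, Set.ncard_coe_finset]
  rcases F.eq_empty_or_nonempty with hFe | hFne
  · rw [hA, hAd, hFe]
    simp only [Finset.filter_empty, Finset.card_empty, Nat.cast_zero, mul_zero, sub_zero,
      abs_zero]
    positivity
  · set u : ℤ := F.min' hFne with hu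
    set v : ℤ := F.max' hFne with hv
    have huF : u ∈ F := F.min'_mem hFne
    have hvF : v ∈ F := F.max'_mem hFne
    have hPu := (hmemF u).1 huF
    have hPv := (hmemF v).1 hvF
    set G : Finset ℤ := (Finset.Icc u v).filter
        (fun n => ¬(0 ≤ fInt a b c n ∧ fInt a b c n ≤ N)) with hGdef
    rcases G.eq_empty_or_nonempty with hGe | hGne
    · have hFI : F = Finset.Icc u v := by
        ext n
        constructor
        · intro h; exact Finset.mem_Icc.2 ⟨F.min'_le n h, F.le_max' n h⟩
        · intro h
          by_contra hcon
          have hnG : n ∈ G := Finset.mem_filter.2 ⟨h, fun hp => hcon ((hmemF n).2 hp)⟩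
          rw [hGe] at hnG
          exact absurd hnG (Finset.notMem_empty n)
      rw [hA, hAd, hFI]
      have est := interval_est' a b c d hd ((Finset.Icc u v).card) u v le_rfl
      have habs := abs_nonneg ((((Finset.Icc u v).filter fun n => (d:ℤ) ∣ fInt a b c n).card : ℝ)
        - (rho a b c d : ℝ) / d * ((Finset.Icc u v).card : ℝ))
      linarith
    · set g1 : ℤ := G.min' hGne with hg1
      set g2 : ℤ := G.max' hGne with hg2
      have hg1G : g1 ∈ G := G.min'_mem hGne
      have hg2G : g2 ∈ G := G.max'_mem hGne
      have hg1m := Finset.mem_filter.1 hg1G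
      have hg2m := Finset.mem_filter.1 hg2G
      have hg1I := Finset.mem_Icc.1 hg1m.1
      have hg2I := Finset.mem_Icc.1 hg2m.1
      have hg12 : g1 ≤ g2 := G.min'_le g2 hg2G
      have hGconv : ∀ n : ℤ, g1 ≤ n → n ≤ g2 →
          ¬(0 ≤ fInt a b c n ∧ fInt a b c n ≤ N) :=
        fun n h1 h2 =>
          G_convex' a b c N ha hPu hPv hg1I.1 h1 h2 hg2I.2 hg1m.2 hg2m.2
      have hug1 : u < g1 := by
        rcases eq_or_lt_of_le hg1I.1 with heq | hlt
        · exact absurd hPu (heq ▸ hg1m.2)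
        · exact hlt
      have hg2v : g2 < v := by
        rcases eq_or_lt_of_le hg2I.2 with heq | hlt
        · exact absurd hPv (heq ▸ hg2m.2)
        · exact hlt
      have hFchar : ∀ n : ℤ, n ∈ F ↔ (u ≤ n ∧ n ≤ g1 - 1) ∨ (g2 + 1 ≤ n ∧ n ≤ v) := by
        intro n
        constructor
        · intro h
          have h1 : u ≤ n := F.min'_le n h
          have h2 : n ≤ v := F.le_max' n h
          have hP := (hmemF n).1 h
          by_contra hcon
          push_neg at hcon
          exact hGconv n (by omega) (by omega) hP
        · rintro (⟨h1, h2⟩ | ⟨h1, h2⟩)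
          · apply (hmemF n).2
            by_contra hcon
            have hnG : n ∈ G := Finset.mem_filter.2 ⟨Finset.mem_Icc.2 ⟨h1, by omega⟩, hcon⟩
            have := G.min'_le n hnG
            omega
          · apply (hmemF n).2
            by_contra hcon
            have hnG : n ∈ G := Finset.mem_filter.2 ⟨Finset.mem_Icc.2 ⟨by omega, h2⟩, hcon⟩
            have := G.le_max' n hnG
            omega
      have hFeq : F = Finset.Icc u (g1 - 1) ∪ Finset.Icc (g2 + 1) v := by
        ext n
        rw [hFchar n]
        simp only [Finset.mem_union, Finset.mem_Icc]
      have hdisj : Disjoint (Finset.Icc u (g1 - 1)) (Finset.Icc (g2 + 1) v) := by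
        simp only [Finset.disjoint_left, Finset.mem_Icc]
        intro n hx hy
        omega
      rw [hA, hAd, hFeq, Finset.filter_union,
        Finset.card_union_of_disjoint (Finset.disjoint_filter_filter hdisj),
        Finset.card_union_of_disjoint hdisj]
      have e1 := interval_est' a b c d hd ((Finset.Icc u (g1 - 1)).card) u (g1 - 1) le_rfl
      have e2 := interval_est' a b c d hd ((Finset.Icc (g2 + 1) v).card) (g2 + 1) v le_rfl
      rw [Nat.cast_add, Nat.cast_add]
      have hkey :
          ((((Finset.Icc u (g1 - 1)).filter fun n => (d:ℤ) ∣ fInt a b c n).card : ℝ)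
            + (((Finset.Icc (g2 + 1) v).filter fun n => (d:ℤ) ∣ fInt a b c n).card : ℝ))
          - (rho a b c d : ℝ) / d *
            (((Finset.Icc u (g1 - 1)).card : ℝ) + ((Finset.Icc (g2 + 1) v).card : ℝ))
          = ((((Finset.Icc u (g1 - 1)).filter fun n => (d:ℤ) ∣ fInt a b c n).card : ℝ)
              - (rho a b c d : ℝ) / d * ((Finset.Icc u (g1 - 1)).card : ℝ))
            + ((((Finset.Icc (g2 + 1) v).filter fun n => (d:ℤ) ∣ fInt a b c n).card : ℝ)
              - (rho a b c d : ℝ) / d * ((Finset.Icc (g2 + 1) v).card : ℝ)) := by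
        ring
      rw [hkey]
      refine le_trans (abs_add_le _ _) ?_
      linarith
end
end

section
/- Let f(x)=ax²+bx+c with a,b,c ∈ ℝ, a ≠ 0, Δ=b²−4ac ≠ 0, and let N > 0. Then the Lebesgue measure X of the set {x ∈ ℝ : 0 ≤ f(x) ≤ N} is given by: X = √(Δ+4aN)/a if Δ<0, a>0 and N > |Δ|/(4a); X = 4N/(√(Δ+4aN)+√Δ) if Δ>0 and a>0, or if Δ>0, a<0 and N ≤ Δ/(4|a|); X = √Δ/|a| if Δ>0, a<0 and N > Δ/(4|a|); and X = 0 in all remaining cases. -/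
open Finset

noncomputable section

open MeasureTheory Set

lemma vol_sq_band (α β : ℝ) (hα : 0 ≤ α) (hαβ : α ≤ β) :
    volume {t : ℝ | α ≤ t^2 ∧ t^2 ≤ β} = ENNReal.ofReal (2*(Real.sqrt β - Real.sqrt α)) := by
  have hβ : 0 ≤ β := hα.trans hαβ
  have hset : {t : ℝ | α ≤ t^2 ∧ t^2 ≤ β}
      = Set.Icc (-Real.sqrt β) (-Real.sqrt α) ∪ Set.Icc (Real.sqrt α) (Real.sqrt β) := by
    ext t
    have h1 : Real.sqrt (t^2) = |t| := Real.sqrt_sq_eq_abs t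
    constructor
    · rintro ⟨ha1, ha2⟩
      have h2 : |t| ≤ Real.sqrt β := by rw [← h1]; exact Real.sqrt_le_sqrt ha2
      have h3 : Real.sqrt α ≤ |t| := by rw [← h1]; exact Real.sqrt_le_sqrt ha1
      rcases abs_cases t with ⟨he, _⟩ | ⟨he, _⟩
      · right; constructor <;> linarith
      · left; constructor <;> linarith
    · rintro (⟨h2, h3⟩ | ⟨h2, h3⟩)
      · constructor
        · calc α = Real.sqrt α ^ 2 := (Real.sq_sqrt hα).symm
            _ ≤ (-t)^2 := pow_le_pow_left₀ (Real.sqrt_nonneg _) (by linarith) 2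
            _ = t^2 := by ring
        · have h5 : (0:ℝ) ≤ -t := le_trans (Real.sqrt_nonneg _) (by linarith)
          calc t^2 = (-t)^2 := by ring
            _ ≤ Real.sqrt β ^ 2 := pow_le_pow_left₀ h5 (by linarith) 2
            _ = β := Real.sq_sqrt hβ
      · constructor
        · calc α = Real.sqrt α ^ 2 := (Real.sq_sqrt hα).symm
            _ ≤ t^2 := pow_le_pow_left₀ (Real.sqrt_nonneg _) h2 2
        · calc t^2 ≤ Real.sqrt β ^ 2 :=
              pow_le_pow_left₀ (le_trans (Real.sqrt_nonneg _) h2) h3 2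
            _ = β := Real.sq_sqrt hβ
  have hsle : Real.sqrt α ≤ Real.sqrt β := Real.sqrt_le_sqrt hαβ
  rw [hset]
  have hd : volume (Set.Icc (-Real.sqrt β) (-Real.sqrt α) ∩ Set.Icc (Real.sqrt α) (Real.sqrt β)) = 0 := by
    have hsub : Set.Icc (-Real.sqrt β) (-Real.sqrt α) ∩ Set.Icc (Real.sqrt α) (Real.sqrt β)
        ⊆ Set.Icc (Real.sqrt α) (-Real.sqrt α) := fun x hx => ⟨hx.2.1, hx.1.2⟩
    refine measure_mono_null hsub ?_
    rw [Real.volume_Icc, ENNReal.ofReal_eq_zero]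
    nlinarith [Real.sqrt_nonneg α]
  rw [measure_union₀ measurableSet_Icc.nullMeasurableSet hd, Real.volume_Icc, Real.volume_Icc,
    ← ENNReal.ofReal_add (by linarith) (by linarith)]
  congr 1; ring

lemma vol_sq_band' (r α β : ℝ) (hα : 0 ≤ α) (hαβ : α ≤ β) :
    volume {x : ℝ | α ≤ (x - r)^2 ∧ (x - r)^2 ≤ β}
      = ENNReal.ofReal (2*(Real.sqrt β - Real.sqrt α)) := by
  have h : {x : ℝ | α ≤ (x - r)^2 ∧ (x - r)^2 ≤ β}
      = (fun x : ℝ => x + (-r)) ⁻¹' {t : ℝ | α ≤ t^2 ∧ t^2 ≤ β} := by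
    ext x; simp [sub_eq_add_neg]
  rw [h, measure_preimage_add_right, vol_sq_band α β hα hαβ]

lemma sqrt_div_foursq (x a : ℝ) (hx : 0 ≤ x) : Real.sqrt (x/(4*a^2)) = Real.sqrt x / (2*|a|) := by
  rw [show (4*a^2 : ℝ) = (2*|a|)^2 by rw [mul_pow, sq_abs]; ring,
    Real.sqrt_div hx, Real.sqrt_sq (by positivity)]

set_option maxHeartbeats 1000000 in
theorem measure_of_superlevel_set (a b c : ℝ) (ha : a ≠ 0)
    (hD : b ^ 2 - 4 * a * c ≠ 0) (N : ℝ) (hN : 0 < N) :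
    (MeasureTheory.volume
        {x : ℝ | 0 ≤ a * x ^ 2 + b * x + c ∧ a * x ^ 2 + b * x + c ≤ N}).toReal =
      (if b ^ 2 - 4 * a * c < 0 ∧ 0 < a ∧ |b ^ 2 - 4 * a * c| / (4 * a) < N then
        Real.sqrt (b ^ 2 - 4 * a * c + 4 * a * N) / a
      else if 0 < b ^ 2 - 4 * a * c ∧ (0 < a ∨
          (a < 0 ∧ N ≤ (b ^ 2 - 4 * a * c) / (4 * |a|))) then
        4 * N / (Real.sqrt (b ^ 2 - 4 * a * c + 4 * a * N) + Real.sqrt (b ^ 2 - 4 * a * c))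
      else if 0 < b ^ 2 - 4 * a * c ∧ a < 0 ∧ (b ^ 2 - 4 * a * c) / (4 * |a|) < N then
        Real.sqrt (b ^ 2 - 4 * a * c) / |a|
      else 0) := by
  have h4a2 : (0:ℝ) < 4*a^2 := by positivity
  set Δ := b ^ 2 - 4 * a * c with hΔdef
  set r := -b/(2*a) with hr
  have key : ∀ x : ℝ, a * x ^ 2 + b * x + c = a * (x - r) ^ 2 + -Δ/(4*a) := by
    intro x; rw [hΔdef, hr]; field_simp; ring
  have id1 : ∀ t : ℝ, a*t^2 + -Δ/(4*a) = (t^2*(4*a^2) - Δ)/(4*a) := by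
    intro t; field_simp; ring
  have id2 : ∀ t : ℝ, N - (a*t^2 + -Δ/(4*a)) = ((Δ + 4*a*N) - t^2*(4*a^2))/(4*a) := by
    intro t; field_simp; ring
  rcases ha.lt_or_gt with hneg | hpos
  · -- a < 0
    have habs : |a| = -a := abs_of_neg hneg
    have h4a : (4:ℝ)*a < 0 := by linarith
    have pos_iff : ∀ X : ℝ, 0 ≤ X/(4*a) ↔ X ≤ 0 := by
      intro X; rw [le_div_iff_of_neg h4a, zero_mul]
    rcases hD.lt_or_gt with hΔneg | hΔpos
    · -- Δ < 0 : empty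
      have hempty : {x : ℝ | 0 ≤ a * x ^ 2 + b * x + c ∧ a * x ^ 2 + b * x + c ≤ N} = ∅ := by
        ext x
        simp only [Set.mem_setOf_eq, Set.mem_empty_iff_false, iff_false, not_and]
        intro h1 _
        rw [key x, ← not_lt] at h1
        exact h1 (by nlinarith [sq_nonneg (x - r), pos_iff ((x-r)^2*(4*a^2) - Δ),
          (id1 (x - r)), div_neg_of_pos_of_neg (show (0:ℝ) < -Δ by linarith) h4a,
          mul_nonpos_of_nonpos_of_nonneg hneg.le (sq_nonneg (x-r))])
      rw [hempty, measure_empty, ENNReal.toReal_zero,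
        if_neg (by rintro ⟨_, h, _⟩; exact absurd h (by linarith)),
        if_neg (by rintro ⟨h, _⟩; linarith),
        if_neg (by rintro ⟨h, _⟩; linarith)]
    · -- Δ > 0, a < 0
      have hsetr : {x : ℝ | 0 ≤ a * x ^ 2 + b * x + c ∧ a * x ^ 2 + b * x + c ≤ N}
          = {x : ℝ | max ((Δ+4*a*N)/(4*a^2)) 0 ≤ (x - r)^2 ∧ (x - r)^2 ≤ Δ/(4*a^2)} := by
        ext x
        simp only [Set.mem_setOf_eq, key x]
        constructor
        · rintro ⟨h1, h2⟩
          rw [id1, pos_iff, sub_nonpos] at h1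
          have h2' : 0 ≤ N - (a*(x-r)^2 + -Δ/(4*a)) := by linarith
          rw [id2, pos_iff, sub_nonpos] at h2'
          exact ⟨max_le ((div_le_iff₀ h4a2).mpr h2') (sq_nonneg _), (le_div_iff₀ h4a2).mpr h1⟩
        · rintro ⟨h1, h2⟩
          have h1' := (div_le_iff₀ h4a2).mp (le_trans (le_max_left _ _) h1)
          have h2' := (le_div_iff₀ h4a2).mp h2
          constructor
          · rw [id1, pos_iff, sub_nonpos]; exact h2'
          · have h3 : 0 ≤ N - (a*(x-r)^2 + -Δ/(4*a)) := by
              rw [id2, pos_iff, sub_nonpos]; exact h1'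
            linarith
      rw [hsetr]
      have hT2 : Real.sqrt Δ ^ 2 = Δ := Real.sq_sqrt hΔpos.le
      have hT0 : 0 < Real.sqrt Δ := Real.sqrt_pos.mpr hΔpos
      rcases le_or_gt 0 (Δ + 4*a*N) with hb | hb
      · -- N ≤ Δ/(4|a|)
        have hmax : max ((Δ+4*a*N)/(4*a^2)) 0 = (Δ+4*a*N)/(4*a^2) :=
          max_eq_left (by positivity)
        have hab : (Δ+4*a*N)/(4*a^2) ≤ Δ/(4*a^2) := by
          gcongr
          nlinarith
        rw [hmax, vol_sq_band' r _ _ (by positivity) hab,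
          ENNReal.toReal_ofReal
            (by nlinarith [Real.sqrt_le_sqrt hab] :
              0 ≤ 2*(Real.sqrt (Δ/(4*a^2)) - Real.sqrt ((Δ+4*a*N)/(4*a^2))))]
        have hS2 : Real.sqrt (Δ + 4*a*N) ^ 2 = Δ + 4*a*N := Real.sq_sqrt hb
        have hNle : N ≤ Δ / (4*|a|) := by
          rw [le_div_iff₀ (by rw [habs]; linarith), habs]; nlinarith
        rw [if_neg (by rintro ⟨h, _⟩; linarith), if_pos ⟨hΔpos, Or.inr ⟨hneg, hNle⟩⟩,
          sqrt_div_foursq _ _ hb, sqrt_div_foursq _ _ hΔpos.le, habs]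
        rw [show 2*(Real.sqrt Δ/(2*-a) - Real.sqrt (Δ+4*a*N)/(2*-a))
            = (Real.sqrt Δ - Real.sqrt (Δ+4*a*N))/(-a) by
              have : -a ≠ 0 := by intro h; exact ha (by linarith)
              field_simp; ring,
          div_eq_div_iff (show -a ≠ 0 by intro h; exact ha (by linarith))
            (by positivity : (0:ℝ) < Real.sqrt (Δ+4*a*N) + Real.sqrt Δ).ne']
        linear_combination hT2 - hS2
      · -- Δ/(4|a|) < N
        have hmax : max ((Δ+4*a*N)/(4*a^2)) 0 = 0 :=
          max_eq_right (div_nonpos_iff.mpr (Or.inr ⟨hb.le, h4a2.le⟩))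
        rw [hmax, vol_sq_band' r _ _ le_rfl (by positivity),
          ENNReal.toReal_ofReal (by
            rw [Real.sqrt_zero]; have := Real.sqrt_nonneg (Δ/(4*a^2)); linarith)]
        have hNgt : Δ / (4*|a|) < N := by
          rw [div_lt_iff₀ (by rw [habs]; linarith), habs]; nlinarith
        rw [if_neg (by rintro ⟨h, _⟩; linarith),
          if_neg (by
            rintro ⟨_, hc | ⟨_, hc⟩⟩
            · linarith
            · rw [le_div_iff₀ (by rw [habs]; linarith), habs] at hc; nlinarith),
          if_pos ⟨hΔpos, hneg, hNgt⟩, sqrt_div_foursq _ _ hΔpos.le, Real.sqrt_zero, habs]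
        field_simp
        ring
  · -- a > 0
    have h4a : (0:ℝ) < 4*a := by linarith
    have pos_iff : ∀ X : ℝ, 0 ≤ X/(4*a) ↔ 0 ≤ X := by
      intro X; rw [le_div_iff₀ h4a, zero_mul]
    have hsetr : {x : ℝ | 0 ≤ a * x ^ 2 + b * x + c ∧ a * x ^ 2 + b * x + c ≤ N}
        = {x : ℝ | max (Δ/(4*a^2)) 0 ≤ (x - r)^2 ∧ (x - r)^2 ≤ (Δ+4*a*N)/(4*a^2)} := by
      ext x
      simp only [Set.mem_setOf_eq, key x]
      constructor
      · rintro ⟨h1, h2⟩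
        rw [id1, pos_iff, sub_nonneg] at h1
        have h2' : 0 ≤ N - (a*(x-r)^2 + -Δ/(4*a)) := by linarith
        rw [id2, pos_iff, sub_nonneg] at h2'
        exact ⟨max_le ((div_le_iff₀ h4a2).mpr h1) (sq_nonneg _), (le_div_iff₀ h4a2).mpr h2'⟩
      · rintro ⟨h1, h2⟩
        have h1' := (div_le_iff₀ h4a2).mp (le_trans (le_max_left _ _) h1)
        have h2' := (le_div_iff₀ h4a2).mp h2
        constructor
        · rw [id1, pos_iff, sub_nonneg]; exact h1'
        · have h3 : 0 ≤ N - (a*(x-r)^2 + -Δ/(4*a)) := by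
            rw [id2, pos_iff, sub_nonneg]; exact h2'
          linarith
    rw [hsetr]
    have habs : |a| = a := abs_of_pos hpos
    rcases hD.lt_or_gt with hΔneg | hΔpos
    · -- Δ < 0, a > 0
      have hmax : max (Δ/(4*a^2)) 0 = 0 :=
        max_eq_right (div_nonpos_iff.mpr (Or.inr ⟨hΔneg.le, h4a2.le⟩))
      rcases lt_trichotomy (Δ + 4*a*N) 0 with hb | hb | hb
      · -- empty
        have hempty : {x : ℝ | max (Δ/(4*a^2)) 0 ≤ (x - r)^2 ∧ (x - r)^2 ≤ (Δ+4*a*N)/(4*a^2)}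
            = ∅ := by
          ext x
          simp only [Set.mem_setOf_eq, Set.mem_empty_iff_false, iff_false, not_and, hmax]
          intro _ h2
          have := (le_div_iff₀ h4a2).mp h2
          nlinarith [sq_nonneg (x - r)]
        rw [hempty, measure_empty, ENNReal.toReal_zero,
          if_neg (by
            rintro ⟨_, _, hc⟩
            rw [div_lt_iff₀ h4a, abs_of_neg hΔneg] at hc; linarith),
          if_neg (by rintro ⟨h, _⟩; linarith), if_neg (by rintro ⟨h, _⟩; linarith)]
      · -- boundary : measure 0
        rw [hmax, vol_sq_band' r _ _ le_rfl (by rw [div_nonneg_iff]; left; constructor <;> linarith),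
          ENNReal.toReal_ofReal (by
            rw [Real.sqrt_zero]; have := Real.sqrt_nonneg ((Δ+4*a*N)/(4*a^2)); linarith),
          show (Δ+4*a*N)/(4*a^2) = 0 by rw [hb, zero_div], Real.sqrt_zero,
          if_neg (by
            rintro ⟨_, _, hc⟩
            rw [div_lt_iff₀ h4a, abs_of_neg hΔneg] at hc; linarith),
          if_neg (by rintro ⟨h, _⟩; linarith), if_neg (by rintro ⟨h, _⟩; linarith)]
        ring
      · -- main positive case
        rw [hmax, vol_sq_band' r _ _ le_rfl (by positivity),
          ENNReal.toReal_ofReal (by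
            rw [Real.sqrt_zero]; have := Real.sqrt_nonneg ((Δ+4*a*N)/(4*a^2)); linarith),
          if_pos ⟨hΔneg, hpos, by rw [div_lt_iff₀ h4a, abs_of_neg hΔneg]; linarith⟩,
          sqrt_div_foursq _ _ (by linarith), Real.sqrt_zero, habs]
        field_simp
        ring
    · -- Δ > 0, a > 0
      have hmax : max (Δ/(4*a^2)) 0 = Δ/(4*a^2) := max_eq_left (by positivity)
      have hab : Δ/(4*a^2) ≤ (Δ+4*a*N)/(4*a^2) := by gcongr; nlinarith
      rw [hmax, vol_sq_band' r _ _ (by positivity) hab,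
        ENNReal.toReal_ofReal (by nlinarith [Real.sqrt_le_sqrt hab] :
          (0:ℝ) ≤ 2*(Real.sqrt ((Δ+4*a*N)/(4*a^2)) - Real.sqrt (Δ/(4*a^2)))),
        if_neg (by rintro ⟨h, _⟩; linarith), if_pos ⟨hΔpos, Or.inl hpos⟩,
        sqrt_div_foursq _ _ (by nlinarith), sqrt_div_foursq _ _ hΔpos.le, habs]
      have hS2 : Real.sqrt (Δ + 4*a*N) ^ 2 = Δ + 4*a*N := Real.sq_sqrt (by nlinarith)
      have hT2 : Real.sqrt Δ ^ 2 = Δ := Real.sq_sqrt hΔpos.le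
      have hT0 : 0 < Real.sqrt Δ := Real.sqrt_pos.mpr hΔpos
      have hS0 : 0 ≤ Real.sqrt (Δ + 4*a*N) := Real.sqrt_nonneg _
      have hrw : ∀ S T : ℝ, 2*(S/(2*a) - T/(2*a)) = (S - T)/a := by
        intro S T; field_simp
      rw [hrw _ _,
        div_eq_div_iff ha (by positivity : (0:ℝ) < Real.sqrt (Δ+4*a*N) + Real.sqrt Δ).ne']
      linear_combination hS2 - hT2
end
end

section
/- Let f be a quadratic polynomial as in the context with |Δ| ≥ 3, A ≥ 2, 0 < L(1,χ_Δ)·log|Δ| < 1, and suppose A ≤ 4·√(N/|a|) and N ≤ |a|·|Δ|^{β/2}. Then β < 2L, i.e. L(1,χ_Δ)·log|Δ| > (L(1,χ_Δ)·log A)². -/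
open Finset

noncomputable section

lemma intFinite (x y : ℝ) : {n : ℤ | x ≤ (n:ℝ) ∧ (n:ℝ) ≤ y}.Finite := by
  apply Set.Finite.subset (Set.finite_Icc ⌈x⌉ ⌊y⌋)
  rintro n ⟨h1, h2⟩
  exact ⟨Int.ceil_le.mpr h1, Int.le_floor.mpr h2⟩

lemma intCount (x y : ℝ) (h : x ≤ y) :
    (({n : ℤ | x ≤ (n:ℝ) ∧ (n:ℝ) ≤ y}).ncard : ℝ) ≤ y - x + 1 := by
  have hsub : {n : ℤ | x ≤ (n:ℝ) ∧ (n:ℝ) ≤ y} ⊆ ↑(Finset.Icc ⌈x⌉ ⌊y⌋) := by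
    rintro n ⟨h1, h2⟩
    simp only [Finset.coe_Icc, Set.mem_Icc]
    exact ⟨Int.ceil_le.mpr h1, Int.le_floor.mpr h2⟩
  have h1 : ({n : ℤ | x ≤ (n:ℝ) ∧ (n:ℝ) ≤ y}).ncard ≤ (Finset.Icc ⌈x⌉ ⌊y⌋).card := by
    rw [← Set.ncard_coe_finset]
    exact Set.ncard_le_ncard hsub (Finset.finite_toSet _)
  have h2 : ((Finset.Icc ⌈x⌉ ⌊y⌋).card : ℝ) ≤ y - x + 1 := by
    rw [Int.card_Icc]
    rcases le_or_gt (⌊y⌋ + 1 - ⌈x⌉) 0 with hc | hc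
    · rw [Int.toNat_of_nonpos hc]; push_cast; linarith
    · have hcast : ((⌊y⌋ + 1 - ⌈x⌉).toNat : ℝ) = ((⌊y⌋:ℝ) + 1 - (⌈x⌉:ℝ)) := by
        have := Int.toNat_of_nonneg hc.le
        exact_mod_cast congrArg (fun z : ℤ => (z : ℝ)) this
      rw [hcast]
      have := Int.floor_le y
      have := Int.le_ceil x
      linarith
  calc (({n : ℤ | x ≤ (n:ℝ) ∧ (n:ℝ) ≤ y}).ncard : ℝ) ≤ ((Finset.Icc ⌈x⌉ ⌊y⌋).card : ℝ) := by
        exact_mod_cast h1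
    _ ≤ y - x + 1 := h2

lemma sqrtSubLe (l u : ℝ) (h : l ≤ u) : Real.sqrt u - Real.sqrt l ≤ Real.sqrt (u - l) := by
  rcases le_or_gt 0 l with hl | hl
  · have h1 : Real.sqrt u ≤ Real.sqrt l + Real.sqrt (u - l) := by
      have h2 : Real.sqrt u ≤ Real.sqrt ((Real.sqrt l + Real.sqrt (u - l))^2) := by
        apply Real.sqrt_le_sqrt
        nlinarith [Real.sq_sqrt hl, Real.sq_sqrt (sub_nonneg.mpr h), Real.sqrt_nonneg l,
          Real.sqrt_nonneg (u - l)]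
      rwa [Real.sqrt_sq (by positivity)] at h2
    linarith
  · rw [Real.sqrt_eq_zero_of_nonpos hl.le]
    have : Real.sqrt u ≤ Real.sqrt (u - l) := Real.sqrt_le_sqrt (by linarith)
    linarith

lemma castKey (a b c D : ℤ) (hD : D = b ^ 2 - 4 * a * c) (n : ℤ) :
    (2*(a:ℝ)*(n:ℝ) + (b:ℝ))^2 = 4*(a:ℝ)*((fInt a b c n : ℤ):ℝ) + (D:ℝ) := by
  have h0 : (2*a*n+b)^2 = 4*a*(fInt a b c n) + D := by rw [hD]; unfold fInt; ring
  exact_mod_cast h0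

lemma absKey (a b : ℤ) (n : ℤ) (ha : a ≠ 0) :
    |2*(a:ℝ)*(n:ℝ) + (b:ℝ)| = 2*|(a:ℝ)| * |(n:ℝ) - (-(b:ℝ)/(2*(a:ℝ)))| := by
  have ha' : (a:ℝ) ≠ 0 := Int.cast_ne_zero.mpr ha
  have h : 2*(a:ℝ)*(n:ℝ) + (b:ℝ) = (2*(a:ℝ)) * ((n:ℝ) - (-(b:ℝ)/(2*(a:ℝ)))) := by
    field_simp
    ring
  rw [h, abs_mul, abs_mul, abs_two]

lemma quadCountNeg (a b c D N : ℤ) (ha : a ≠ 0) (hD : D = b ^ 2 - 4 * a * c)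
    (hDneg : D < 0) (E : ℝ) (hE0 : 0 ≤ E) (hNE : (N : ℝ) ≤ |(a : ℝ)| * E ^ 2) :
    (Acard a b c N : ℝ) ≤ 2 * E + 1 := by
  have ha' : (a:ℝ) ≠ 0 := Int.cast_ne_zero.mpr ha
  have haR : 0 < |(a:ℝ)| := abs_pos.mpr ha'
  unfold Acard
  rcases lt_or_gt_of_ne ha with haneg | hapos
  · -- a < 0 : the set is empty
    have hS : {n : ℤ | 0 ≤ fInt a b c n ∧ fInt a b c n ≤ N} = ∅ := by
      ext n
      simp only [Set.mem_setOf_eq, Set.mem_empty_iff_false, iff_false, not_and]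
      intro h1 h2
      have h1' : (0:ℝ) ≤ ((fInt a b c n : ℤ):ℝ) := by exact_mod_cast h1
      have haneg' : (a:ℝ) < 0 := by exact_mod_cast haneg
      have hDneg' : ((D:ℤ):ℝ) < 0 := by exact_mod_cast hDneg
      nlinarith [castKey a b c D hD n, sq_nonneg (2*(a:ℝ)*(n:ℝ) + (b:ℝ)),
        mul_nonneg (neg_nonneg.mpr haneg'.le) h1']
    rw [hS, Set.ncard_empty]
    push_cast
    linarith
  · have hapos' : (0:ℝ) < (a:ℝ) := by exact_mod_cast hapos
    set v : ℝ := -(b:ℝ)/(2*(a:ℝ)) with hv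
    set R : ℝ := Real.sqrt (4*(a:ℝ)*(N:ℝ)) / (2*(a:ℝ)) with hR
    have hR0 : 0 ≤ R := by rw [hR]; positivity
    have hsub : {n : ℤ | 0 ≤ fInt a b c n ∧ fInt a b c n ≤ N} ⊆
        {n : ℤ | v - R ≤ (n:ℝ) ∧ (n:ℝ) ≤ v + R} := by
      rintro n ⟨h1, h2⟩
      have h1' : (0:ℝ) ≤ ((fInt a b c n : ℤ):ℝ) := by exact_mod_cast h1
      have h2' : ((fInt a b c n : ℤ):ℝ) ≤ (N:ℝ) := by exact_mod_cast h2
      have hDneg' : ((D:ℤ):ℝ) < 0 := by exact_mod_cast hDneg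
      have hm2 : (2*(a:ℝ)*(n:ℝ) + (b:ℝ))^2 ≤ 4*(a:ℝ)*(N:ℝ) := by
        nlinarith [castKey a b c D hD n]
      have habs : |2*(a:ℝ)*(n:ℝ) + (b:ℝ)| ≤ Real.sqrt (4*(a:ℝ)*(N:ℝ)) :=
        Real.abs_le_sqrt hm2
      rw [absKey a b n ha, ← hv] at habs
      have habs2 : |(n:ℝ) - v| ≤ R := by
        rw [hR, le_div_iff₀ (by positivity)]
        rw [abs_of_pos hapos'] at habs
        nlinarith [habs]
      have hpair := abs_le.mp habs2
      exact ⟨by linarith [hpair.1], by linarith [hpair.2]⟩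
    have hRE : R ≤ E := by
      have h4 : 4*(a:ℝ)*(N:ℝ) ≤ (2*(a:ℝ)*E)^2 := by
        rw [abs_of_pos hapos'] at hNE
        nlinarith
      have h5 : Real.sqrt (4*(a:ℝ)*(N:ℝ)) ≤ 2*(a:ℝ)*E := by
        calc Real.sqrt (4*(a:ℝ)*(N:ℝ)) ≤ Real.sqrt ((2*(a:ℝ)*E)^2) := Real.sqrt_le_sqrt h4
          _ = 2*(a:ℝ)*E := Real.sqrt_sq (by positivity)
      rw [hR, div_le_iff₀ (by positivity)]
      linarith
    have hle := Set.ncard_le_ncard hsub (intFinite (v - R) (v + R))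
    have hcnt := intCount (v - R) (v + R) (by linarith)
    have : (({n : ℤ | 0 ≤ fInt a b c n ∧ fInt a b c n ≤ N}).ncard : ℝ) ≤ (v + R) - (v - R) + 1 := by
      calc (({n : ℤ | 0 ≤ fInt a b c n ∧ fInt a b c n ≤ N}).ncard : ℝ)
          ≤ (({n : ℤ | v - R ≤ (n:ℝ) ∧ (n:ℝ) ≤ v + R}).ncard : ℝ) := by exact_mod_cast hle
        _ ≤ (v + R) - (v - R) + 1 := hcnt
    linarith

lemma quadCountPos (a b c D N : ℤ) (ha : a ≠ 0) (hD : D = b ^ 2 - 4 * a * c)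
    (hDpos : 0 < D) (hN : 0 ≤ N) (E : ℝ) (hE0 : 0 ≤ E)
    (hNE : (N : ℝ) ≤ |(a : ℝ)| * E ^ 2) :
    (Acard a b c N : ℝ) ≤ 2 * E + 2 := by
  have ha' : (a:ℝ) ≠ 0 := Int.cast_ne_zero.mpr ha
  have haR : 0 < |(a:ℝ)| := abs_pos.mpr ha'
  have hN' : (0:ℝ) ≤ (N:ℝ) := by exact_mod_cast hN
  unfold Acard
  set v : ℝ := -(b:ℝ)/(2*(a:ℝ)) with hv
  obtain ⟨l, u, hlu, hduL, hbound⟩ :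
      ∃ l u : ℝ, l ≤ u ∧ u - l ≤ (2 * |(a:ℝ)| * E)^2 ∧
        ∀ n : ℤ, 0 ≤ fInt a b c n → fInt a b c n ≤ N →
          l ≤ (2*(a:ℝ)*(n:ℝ) + (b:ℝ))^2 ∧ (2*(a:ℝ)*(n:ℝ) + (b:ℝ))^2 ≤ u := by
    have hDpos' : (0:ℝ) < ((D:ℤ):ℝ) := by exact_mod_cast hDpos
    rcases lt_or_gt_of_ne ha with haneg | hapos
    · have haneg' : (a:ℝ) < 0 := by exact_mod_cast haneg
      have habs : |(a:ℝ)| = -(a:ℝ) := abs_of_neg haneg'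
      refine ⟨4*(a:ℝ)*(N:ℝ) + (D:ℝ), (D:ℝ), by nlinarith, by rw [habs] at hNE ⊢; nlinarith, ?_⟩
      intro n h1 h2
      have h1' : (0:ℝ) ≤ ((fInt a b c n : ℤ):ℝ) := by exact_mod_cast h1
      have h2' : ((fInt a b c n : ℤ):ℝ) ≤ (N:ℝ) := by exact_mod_cast h2
      constructor
      · nlinarith [castKey a b c D hD n]
      · nlinarith [castKey a b c D hD n]
    · have hapos' : (0:ℝ) < (a:ℝ) := by exact_mod_cast hapos
      have habs : |(a:ℝ)| = (a:ℝ) := abs_of_pos hapos'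
      refine ⟨(D:ℝ), 4*(a:ℝ)*(N:ℝ) + (D:ℝ), by nlinarith, by rw [habs] at hNE ⊢; nlinarith, ?_⟩
      intro n h1 h2
      have h1' : (0:ℝ) ≤ ((fInt a b c n : ℤ):ℝ) := by exact_mod_cast h1
      have h2' : ((fInt a b c n : ℤ):ℝ) ≤ (N:ℝ) := by exact_mod_cast h2
      constructor
      · nlinarith [castKey a b c D hD n]
      · nlinarith [castKey a b c D hD n]
  set s : ℝ := Real.sqrt l / (2*|(a:ℝ)|) with hs
  set R : ℝ := Real.sqrt u / (2*|(a:ℝ)|) with hRdef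
  have hsR : s ≤ R := by
    rw [hs, hRdef]
    exact (div_le_div_iff_of_pos_right (by positivity)).mpr (Real.sqrt_le_sqrt hlu)
  have hs0 : 0 ≤ s := by rw [hs]; positivity
  have hsub : {n : ℤ | 0 ≤ fInt a b c n ∧ fInt a b c n ≤ N} ⊆
      {n : ℤ | v - R ≤ (n:ℝ) ∧ (n:ℝ) ≤ v - s} ∪ {n : ℤ | v + s ≤ (n:ℝ) ∧ (n:ℝ) ≤ v + R} := by
    rintro n ⟨h1, h2⟩
    obtain ⟨hl, hu⟩ := hbound n h1 h2
    have hml : Real.sqrt l ≤ |2*(a:ℝ)*(n:ℝ) + (b:ℝ)| := by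
      calc Real.sqrt l ≤ Real.sqrt ((2*(a:ℝ)*(n:ℝ) + (b:ℝ))^2) := Real.sqrt_le_sqrt hl
        _ = |2*(a:ℝ)*(n:ℝ) + (b:ℝ)| := Real.sqrt_sq_eq_abs _
    have hmu : |2*(a:ℝ)*(n:ℝ) + (b:ℝ)| ≤ Real.sqrt u := Real.abs_le_sqrt hu
    rw [absKey a b n ha, ← hv] at hml hmu
    have hs' : s ≤ |(n:ℝ) - v| := by
      rw [hs, div_le_iff₀ (by positivity)]
      nlinarith [hml]
    have hR' : |(n:ℝ) - v| ≤ R := by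
      rw [hRdef, le_div_iff₀ (by positivity)]
      nlinarith [hmu]
    have hpair := abs_le.mp hR'
    simp only [Set.mem_union, Set.mem_setOf_eq]
    rcases le_abs.mp hs' with hc | hc
    · right; exact ⟨by linarith, by linarith [hpair.2]⟩
    · left; exact ⟨by linarith [hpair.1], by linarith⟩
  have hRsE : R - s ≤ E := by
    have h1 := sqrtSubLe l u hlu
    have h2 : Real.sqrt (u - l) ≤ 2 * |(a:ℝ)| * E := by
      calc Real.sqrt (u - l) ≤ Real.sqrt ((2 * |(a:ℝ)| * E)^2) := Real.sqrt_le_sqrt hduL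
        _ = 2 * |(a:ℝ)| * E := Real.sqrt_sq (by positivity)
    rw [hs, hRdef, div_sub_div_same, div_le_iff₀ (by positivity)]
    nlinarith [h1, h2]
  have hfin1 := intFinite (v - R) (v - s)
  have hfin2 := intFinite (v + s) (v + R)
  have hle := Set.ncard_le_ncard hsub (hfin1.union hfin2)
  have hunion := Set.ncard_union_le {n : ℤ | v - R ≤ (n:ℝ) ∧ (n:ℝ) ≤ v - s}
      {n : ℤ | v + s ≤ (n:ℝ) ∧ (n:ℝ) ≤ v + R}
  have hc1 := intCount (v - R) (v - s) (by linarith)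
  have hc2 := intCount (v + s) (v + R) (by linarith)
  have hchain : (({n : ℤ | 0 ≤ fInt a b c n ∧ fInt a b c n ≤ N}).ncard : ℝ) ≤
      ((v - s) - (v - R) + 1) + ((v + R) - (v + s) + 1) := by
    have hle' : (({n : ℤ | 0 ≤ fInt a b c n ∧ fInt a b c n ≤ N}).ncard : ℝ) ≤
        (({n : ℤ | v - R ≤ (n:ℝ) ∧ (n:ℝ) ≤ v - s}).ncard : ℝ) +
        (({n : ℤ | v + s ≤ (n:ℝ) ∧ (n:ℝ) ≤ v + R}).ncard : ℝ) := by
      exact_mod_cast le_trans hle hunion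
    linarith [hc1, hc2]
  linarith

theorem beta_lt_two_L (a b c D N : ℤ)
    (ha : a ≠ 0) (hgcd : Int.gcd a (Int.gcd b c) = 1)
    (hpar : Odd (a + b) ∨ Odd c)
    (hD : D = b ^ 2 - 4 * a * c) (hsq : ¬ IsSquare D)
    (hN : 1 ≤ N) (hDabs : (3:ℝ) ≤ |(D : ℝ)|) (hA : 2 ≤ Acard a b c N)
    (hLpos : 0 < LOne D * Real.log |(D : ℝ)|)
    (hLlt : LOne D * Real.log |(D : ℝ)| < 1)
    (hAub : (Acard a b c N : ℝ) ≤ 4 * Real.sqrt ((N : ℝ) / |(a : ℝ)|))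
    (hNub : (N : ℝ) ≤ ((|a| : ℤ) : ℝ) * |(D : ℝ)| ^ (betaE D / 2)) :
    betaE D < 2 * (-Real.log (LOne D * Real.log (Acard a b c N : ℝ))) ∧
      (LOne D * Real.log (Acard a b c N : ℝ)) ^ 2 < LOne D * Real.log |(D : ℝ)| := by
  have hDabs0 : (0:ℝ) < |(D:ℝ)| := by linarith
  have hd3 : Real.log 3 ≤ Real.log |(D:ℝ)| := Real.log_le_log (by norm_num) hDabs
  have hd0 : 0 < Real.log |(D:ℝ)| := lt_of_lt_of_le (Real.log_pos (by norm_num)) hd3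
  have hLone : 0 < LOne D := by
    rcases mul_pos_iff.mp hLpos with ⟨h1, _⟩ | ⟨_, h2⟩
    · exact h1
    · linarith
  have hβpos : 0 < betaE D := by
    have h1 : Real.log (LOne D * Real.log |(D:ℝ)|) < 0 := Real.log_neg hLpos hLlt
    unfold betaE
    linarith
  obtain ⟨E, hEdef⟩ : ∃ E : ℝ, E = Real.exp (Real.log |(D:ℝ)| * (betaE D / 4)) := ⟨_, rfl⟩
  have hE1 : 1 ≤ E := by rw [hEdef]; apply Real.one_le_exp; positivity
  have hE0 : (0:ℝ) ≤ E := by linarith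
  have hNE : (N:ℝ) ≤ |(a:ℝ)| * E^2 := by
    have h1 : |(D:ℝ)| ^ (betaE D / 2) = E^2 := by
      rw [Real.rpow_def_of_pos hDabs0, hEdef, sq, ← Real.exp_add]
      congr 1; ring
    have h2 : ((|a| : ℤ) : ℝ) = |(a:ℝ)| := by push_cast; ring
    rw [← h1, ← h2]
    exact hNub
  obtain ⟨K, hK1, hKd, hAK⟩ : ∃ K : ℝ, 1 ≤ K ∧ Real.log K ≤ Real.log |(D:ℝ)| ∧
      (Acard a b c N : ℝ) ≤ K * E := by
    rcases lt_trichotomy D 0 with hDneg | hD0 | hDpos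
    · refine ⟨3, by norm_num, hd3, ?_⟩
      have h := quadCountNeg a b c D N ha hD hDneg E hE0 hNE
      linarith
    · exfalso; rw [hD0] at hDabs; norm_num at hDabs
    · have hDpos' : (0:ℝ) < (D:ℝ) := by exact_mod_cast hDpos
      have hD3 : 3 ≤ D := by
        have h3 : (3:ℝ) ≤ (D:ℝ) := by rwa [abs_of_pos hDpos'] at hDabs
        exact_mod_cast h3
      have hmod : D % 4 = 0 ∨ D % 4 = 1 := by
        rcases Int.even_or_odd b with ⟨k, hk⟩ | ⟨k, hk⟩
        · left
          have h4 : D = 4*(k*k - a*c) := by rw [hD, hk]; ring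
          omega
        · right
          have h4 : D = 4*(k*k + k - a*c) + 1 := by rw [hD, hk]; ring
          omega
      have hD4 : D ≠ 4 := by rintro rfl; exact hsq ⟨2, by norm_num⟩
      have hD5 : 5 ≤ D := by omega
      have hd4 : Real.log 4 ≤ Real.log |(D:ℝ)| := by
        apply Real.log_le_log (by norm_num)
        have h5 : (5:ℝ) ≤ (D:ℝ) := by exact_mod_cast hD5
        rw [abs_of_pos hDpos']
        linarith
      refine ⟨4, by norm_num, hd4, ?_⟩
      have h := quadCountPos a b c D N ha hD hDpos (by linarith) E hE0 hNE
      linarith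
  have hA2 : (2:ℝ) ≤ (Acard a b c N : ℝ) := by exact_mod_cast hA
  have hlogA0 : 0 < Real.log (Acard a b c N : ℝ) := Real.log_pos (by linarith)
  have hlogA : Real.log (Acard a b c N : ℝ) ≤ Real.log |(D:ℝ)| * (1 + betaE D / 4) := by
    have h1 : Real.log (Acard a b c N : ℝ) ≤ Real.log (K * E) :=
      Real.log_le_log (by linarith) hAK
    rw [Real.log_mul (by linarith) (by rw [hEdef]; exact Real.exp_ne_zero _),
      hEdef, Real.log_exp] at h1
    nlinarith [hKd]
  have hXexp : LOne D * Real.log |(D:ℝ)| = Real.exp (-(betaE D)) := by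
    unfold betaE
    rw [neg_neg, Real.exp_log hLpos]
  have hcore : (LOne D * Real.log |(D:ℝ)|) * (Real.log (Acard a b c N : ℝ))^2
      < (Real.log |(D:ℝ)|)^2 := by
    have h2 : 1 + betaE D / 4 ≤ Real.exp (betaE D / 4) := by
      have := Real.add_one_le_exp (betaE D / 4); linarith
    have h3 : Real.exp (-(betaE D)) * (Real.exp (betaE D / 4))^2 = Real.exp (-(betaE D)/2) := by
      rw [sq, ← Real.exp_add, ← Real.exp_add]; congr 1; ring
    have h4 : Real.exp (-(betaE D)/2) < 1 := Real.exp_lt_one_iff.mpr (by linarith)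
    have h5 : (Real.log (Acard a b c N : ℝ))^2 ≤ (Real.log |(D:ℝ)| * (1 + betaE D/4))^2 :=
      pow_le_pow_left₀ hlogA0.le hlogA 2
    have h6 : Real.exp (-(betaE D)) * (1 + betaE D/4)^2 < 1 := by
      have h7 : (1 + betaE D/4)^2 ≤ (Real.exp (betaE D/4))^2 :=
        pow_le_pow_left₀ (by linarith) h2 2
      calc Real.exp (-(betaE D)) * (1 + betaE D/4)^2
          ≤ Real.exp (-(betaE D)) * (Real.exp (betaE D/4))^2 :=
            mul_le_mul_of_nonneg_left h7 (Real.exp_pos _).le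
        _ = Real.exp (-(betaE D)/2) := h3
        _ < 1 := h4
    calc (LOne D * Real.log |(D:ℝ)|) * (Real.log (Acard a b c N : ℝ))^2
        ≤ (LOne D * Real.log |(D:ℝ)|) * (Real.log |(D:ℝ)| * (1 + betaE D/4))^2 :=
          mul_le_mul_of_nonneg_left h5 hLpos.le
      _ = (Real.log |(D:ℝ)|)^2 * (Real.exp (-(betaE D)) * (1 + betaE D/4)^2) := by
          rw [hXexp]; ring
      _ < (Real.log |(D:ℝ)|)^2 * 1 := by
          exact mul_lt_mul_of_pos_left h6 (by positivity)
      _ = (Real.log |(D:ℝ)|)^2 := mul_one _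
  have hconc2 : (LOne D * Real.log (Acard a b c N : ℝ))^2 < LOne D * Real.log |(D:ℝ)| := by
    nlinarith [mul_lt_mul_of_pos_left hcore hLone, hd0, hLone, hLpos, hlogA0]
  refine ⟨?_, hconc2⟩
  have hY : 0 < LOne D * Real.log (Acard a b c N : ℝ) := mul_pos hLone hlogA0
  have hlog2 : Real.log ((LOne D * Real.log (Acard a b c N : ℝ))^2)
      < Real.log (LOne D * Real.log |(D:ℝ)|) := Real.log_lt_log (by positivity) hconc2
  rw [Real.log_pow] at hlog2
  push_cast at hlog2
  unfold betaE
  linarith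
end
end
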